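/- Let k ≥ 1 and a an integer with 0 < a < 2^k. Then the number of elements x ∈ Z/2^kZ with ord_2(x) = ord_2(a) and cop_2(x) ≡ cop_2(a) (mod 8) equals max(2^{k−ord_2(a)−3}, 1). -/

import Mathlib

/-- the number of x ∈ ZMod 2^k with the same 2-order as a and
odd part congruent to that of a mod 8 is max(2^(k−ord_2(a)−3), 1). -/
theorem symbol_class_size_two (k : ℕ) (hk : 0 < k) (a : ℕ) (ha : 0 < a)
    (hak : a < 2 ^ k) :
    Nat.card {x : ZMod (2 ^ k) //
        padicValNat 2 x.val = padicValNat 2 a ∧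
        (x.val / 2 ^ padicValNat 2 x.val) % 8 = (a / 2 ^ padicValNat 2 a) % 8} =
      max (2 ^ (k - padicValNat 2 a - 3)) 1 := by
  haveI : Fact (Nat.Prime 2) := ⟨Nat.prime_two⟩
  haveI : NeZero (2 ^ k) := ⟨pow_ne_zero k two_ne_zero⟩
  set v := padicValNat 2 a with hv
  set c := (a / 2 ^ v) % 8 with hc
  have h2v : (0:ℕ) < 2 ^ v := by positivity
  have hdvd : 2 ^ v ∣ a := pow_padicValNat_dvd
  have hm0 : 2 ^ v * (a / 2 ^ v) = a := Nat.mul_div_cancel' hdvd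
  have hm0odd : ¬ 2 ∣ (a / 2 ^ v) := by
    intro h
    have : 2 ^ (v + 1) ∣ a := by
      rcases h with ⟨t, ht⟩
      exact ⟨t, by rw [← hm0, ht]; ring⟩
    exact pow_succ_padicValNat_not_dvd ha.ne' this
  have hcodd : c % 2 = 1 := by
    have h1 : c % 2 = (a / 2 ^ v) % 2 := Nat.mod_mod_of_dvd _ (by norm_num)
    rw [h1, Nat.two_dvd_ne_zero.mp hm0odd]
  have hcne : c ≠ 0 := by omega
  have hclt : c < 8 := Nat.mod_lt _ (by norm_num)
  have hvk : v < k := by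
    have h1 : 2 ^ v ≤ a := Nat.le_of_dvd ha hdvd
    have := lt_of_le_of_lt h1 hak
    exact (Nat.pow_lt_pow_iff_right (by norm_num)).mp this
  set M := 2 ^ (k - v - 3) with hM
  -- key membership fact
  have hmem : ∀ m : ℕ, m % 8 = c → 2 ^ v * m < 2 ^ k →
      padicValNat 2 (2 ^ v * m) = v ∧ ((2 ^ v * m) / 2 ^ v) % 8 = c := by
    intro m hm hlt
    have hmne : m ≠ 0 := by intro h; rw [h] at hm; simp at hm; exact hcne hm.symm
    have hmodd : ¬ 2 ∣ m := by omega
    constructor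
    · rw [padicValNat.mul (pow_ne_zero v two_ne_zero) hmne, padicValNat.prime_pow,
        padicValNat.eq_zero_of_not_dvd hmodd]
      omega
    · rw [Nat.mul_div_cancel_left _ h2v, hm]
  -- main bijection
  have hbij : Function.Bijective (fun i : Fin M =>
      (⟨((2 ^ v * (8 * i.val + c) : ℕ) : ZMod (2 ^ k)), by
        have hlt : 2 ^ v * (8 * i.val + c) < 2 ^ k := by
          rcases le_or_gt 3 (k - v) with h3 | h3
          · have : 8 * i.val + c < 8 * M := by
              have := i.isLt; omega
            have h8M : 8 * M = 2 ^ (k - v) := by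
              rw [hM]
              have : k - v - 3 + 3 = k - v := by omega
              rw [show (8:ℕ) = 2 ^ 3 by norm_num, ← pow_add]
              congr 1; omega
            calc 2 ^ v * (8 * i.val + c) < 2 ^ v * (2 ^ (k - v)) := by
                  exact (Nat.mul_lt_mul_left h2v).mpr (by omega)
              _ = 2 ^ k := by rw [← pow_add]; congr 1; omega
          · -- small case: M = 1 so i = 0, and 2^v * c = a
            have hM1 : M = 1 := by rw [hM, show k - v - 3 = 0 from by omega, pow_zero]
            have hi0 : i.val = 0 := by have := i.isLt; omega
            have hm0lt : a / 2 ^ v < 8 := by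
              have h1 : 2 ^ v * (a / 2 ^ v) < 2 ^ v * 2 ^ (k - v) := by
                rw [hm0, ← pow_add, show v + (k - v) = k by omega]; exact hak
              have h2 : a / 2 ^ v < 2 ^ (k - v) := lt_of_mul_lt_mul_left h1 (le_of_lt h2v)
              calc a / 2 ^ v < 2 ^ (k - v) := h2
                _ ≤ 2 ^ 2 := Nat.pow_le_pow_right (by norm_num) (by omega)
                _ < 8 := by norm_num
            have hceq : c = a / 2 ^ v := by rw [hc, Nat.mod_eq_of_lt hm0lt]
            rw [hi0]; simp only [Nat.mul_zero, Nat.zero_add]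
            rw [hceq, hm0]; exact hak
        have hval : (((2 ^ v * (8 * i.val + c) : ℕ) : ZMod (2 ^ k))).val
            = 2 ^ v * (8 * i.val + c) := ZMod.val_natCast_of_lt hlt
        rw [hval]
        obtain ⟨h1, h2⟩ := hmem _ (by omega) hlt
        exact ⟨h1, by rw [h1]; exact h2⟩⟩ :
      {x : ZMod (2 ^ k) // padicValNat 2 x.val = v ∧ (x.val / 2 ^ padicValNat 2 x.val) % 8 = c})) := by
    constructor
    · intro i j hij
      have h1 := congrArg (fun x => (Subtype.val x).val) hij
      simp only at h1
      rw [ZMod.val_natCast_of_lt, ZMod.val_natCast_of_lt] at h1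
      · have := Nat.eq_of_mul_eq_mul_left h2v h1
        exact Fin.ext (by omega)
      all_goals {
        rcases le_or_gt 3 (k - v) with h3 | h3
        · have h8M : 8 * M = 2 ^ (k - v) := by
            rw [hM, show (8:ℕ) = 2 ^ 3 by norm_num, ← pow_add]
            congr 1; omega
          calc 2 ^ v * _ < 2 ^ v * (2 ^ (k - v)) := by
                refine (Nat.mul_lt_mul_left h2v).mpr ?_
                first
                  | (have := i.isLt; omega)
                  | (have := j.isLt; omega)
            _ = 2 ^ k := by rw [← pow_add]; congr 1; omega
        · have hM1 : M = 1 := by rw [hM, show k - v - 3 = 0 from by omega, pow_zero]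
          have hm0lt : a / 2 ^ v < 8 := by
            have h1' : 2 ^ v * (a / 2 ^ v) < 2 ^ v * 2 ^ (k - v) := by
              rw [hm0, ← pow_add, show v + (k - v) = k by omega]; exact hak
            have h2 : a / 2 ^ v < 2 ^ (k - v) := lt_of_mul_lt_mul_left h1' (le_of_lt h2v)
            calc a / 2 ^ v < 2 ^ (k - v) := h2
              _ ≤ 2 ^ 2 := Nat.pow_le_pow_right (by norm_num) (by omega)
              _ < 8 := by norm_num
          have hceq : c = a / 2 ^ v := by rw [hc, Nat.mod_eq_of_lt hm0lt]
          have hi0 : (⟨0, by omega⟩ : Fin M).val = 0 := rfl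
          first
            | (have hiv : i.val = 0 := by have := i.isLt; omega
               rw [hiv]; simp only [Nat.mul_zero, Nat.zero_add]; rw [hceq, hm0]; exact hak)
            | (have hjv : j.val = 0 := by have := j.isLt; omega
               rw [hjv]; simp only [Nat.mul_zero, Nat.zero_add]; rw [hceq, hm0]; exact hak) }
    · rintro ⟨x, hx1, hx2⟩
      set n := x.val with hn
      have hnlt : n < 2 ^ k := x.val_lt
      have hnne : n ≠ 0 := by
        intro h
        rw [h] at hx1 hx2
        simp [padicValNat.zero] at hx1 hx2
        exact hcne hx2.symm
      have hdvdn : 2 ^ v ∣ n := by rw [← hx1]; exact pow_padicValNat_dvd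
      set m := n / 2 ^ v with hmdef
      have hnm : 2 ^ v * m = n := Nat.mul_div_cancel' hdvdn
      have hmc : m % 8 = c := by rw [hmdef, ← hx1]; exact hx2
      have hmlt : m < 2 ^ (k - v) := by
        have h1 : 2 ^ v * m < 2 ^ v * 2 ^ (k - v) := by
          rw [hnm, ← pow_add, show v + (k - v) = k by omega]; exact hnlt
        exact lt_of_mul_lt_mul_left h1 (le_of_lt h2v)
      have hi : m / 8 < M := by
        rcases le_or_gt 3 (k - v) with h3 | h3
        · have h8M : 8 * M = 2 ^ (k - v) := by
            rw [hM, show (8:ℕ) = 2 ^ 3 by norm_num, ← pow_add]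
            congr 1; omega
          omega
        · have hM1 : M = 1 := by rw [hM, show k - v - 3 = 0 from by omega, pow_zero]
          have : 2 ^ (k - v) ≤ 2 ^ 2 := Nat.pow_le_pow_right (by norm_num) (by omega)
          omega
      refine ⟨⟨m / 8, hi⟩, ?_⟩
      apply Subtype.ext
      have heq : 2 ^ v * (8 * (m / 8) + c) = n := by
        rw [← hmc, ← hnm]; congr 1; omega
      show ((2 ^ v * (8 * (m / 8) + c) : ℕ) : ZMod (2 ^ k)) = x
      rw [heq, hn]
      exact ZMod.natCast_rightInverse x
  have hcard : Nat.card {x : ZMod (2 ^ k) //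
        padicValNat 2 x.val = v ∧ (x.val / 2 ^ padicValNat 2 x.val) % 8 = c} = M := by
    rw [← Nat.card_eq_of_bijective _ hbij, Nat.card_eq_fintype_card, Fintype.card_fin]
  rw [hcard, hM]
  exact (max_eq_left (Nat.one_le_two_pow)).symm
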